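/- Let (X,G) be a Cantor dynamical system in which every G-orbit has at least three points. Then the clopen supports of involutions in the full group [G] generate the Boolean algebra CO(X) of clopen subsets of X: every clopen set can be obtained from sets of the form spr(π), with π an involution in [G] having clopen support, using finitely many unions, intersections and complements. -/

import Mathlib

open Set

variable {X : Type*} [TopologicalSpace X]

noncomputable instance Homeomorph.instGroup' : Group (X ≃ₜ X) where
  mul f g := g.trans f
  one := Homeomorph.refl X
  inv := Homeomorph.symm
  mul_assoc _ _ _ := Homeomorph.ext fun _ => rfl
  one_mul _ := Homeomorph.ext fun _ => rfl
  mul_one _ := Homeomorph.ext fun _ => rfl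
  inv_mul_cancel f := Homeomorph.ext fun x => f.symm_apply_apply x

@[simp] theorem Homeomorph.mul_apply' (f g : X ≃ₜ X) (x : X) : (f * g) x = f (g x) := rfl
@[simp] theorem Homeomorph.one_apply' (x : X) : (1 : X ≃ₜ X) x = x := rfl

/-- The support of a homeomorphism. -/
def spr (γ : X ≃ₜ X) : Set X := interior (closure {x | γ x ≠ x})

/-- The orbit of a point under a subgroup of homeomorphisms. -/
def orbitOf (G : Subgroup (X ≃ₜ X)) (x : X) : Set X := {y | ∃ g ∈ G, (g : X ≃ₜ X) x = y}

/-- The full group of a Cantor dynamical system. -/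
def fullGroup (G : Subgroup (X ≃ₜ X)) : Subgroup (X ≃ₜ X) where
  carrier := {γ | ∀ x, γ x ∈ orbitOf G x}
  one_mem' x := ⟨1, G.one_mem, rfl⟩
  mul_mem' {a b} ha hb x := by
    obtain ⟨h, hh, hbx⟩ := hb x
    obtain ⟨g, hg, hax⟩ := ha (b x)
    exact ⟨g * h, G.mul_mem hg hh, by simp only [Homeomorph.mul_apply'] at *; rw [hbx, hax]⟩
  inv_mem' {a} ha := by
    intro x
    obtain ⟨g, hg, hax⟩ := ha (a⁻¹ x)
    refine ⟨g⁻¹, G.inv_mem hg, ?_⟩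
    have : a (a⁻¹ x) = x := a.apply_symm_apply x
    rw [this] at hax
    have : (g⁻¹ : X ≃ₜ X) (g (a⁻¹ x)) = a⁻¹ x := g.symm_apply_apply _
    rw [hax] at this
    exact this


/-- Sets obtainable from a family by finitely many unions, intersections and complements. -/
inductive GenBoolAlg {X : Type*} (S : Set (Set X)) : Set X → Prop
  | basic {A : Set X} : A ∈ S → GenBoolAlg S A
  | union {A B : Set X} : GenBoolAlg S A → GenBoolAlg S B → GenBoolAlg S (A ∪ B)
  | inter {A B : Set X} : GenBoolAlg S A → GenBoolAlg S B → GenBoolAlg S (A ∩ B)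
  | compl {A : Set X} : GenBoolAlg S A → GenBoolAlg S Aᶜ

section SwapAux

open Classical in
/-- The map swapping a set `U` with its image `g '' U` via `g`, fixing everything else. -/
noncomputable def swapFun (g : X ≃ₜ X) (U : Set X) : X → X :=
  fun x => if x ∈ U then g x else if x ∈ (⇑g) '' U then g.symm x else x

variable {g : X ≃ₜ X} {U : Set X}

theorem swapFun_involutive (hd : Disjoint U ((⇑g) '' U)) :
    Function.Involutive (swapFun g U) := by
  classical
  intro x
  unfold swapFun
  by_cases h1 : x ∈ U
  · have hgx : g x ∈ (⇑g) '' U := ⟨x, h1, rfl⟩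
    have hgx' : g x ∉ U := fun h => Set.disjoint_left.mp hd h hgx
    simp [h1, hgx, hgx', g.symm_apply_apply]
  · by_cases h2 : x ∈ (⇑g) '' U
    · obtain ⟨y, hy, rfl⟩ := h2
      have hgy : (g : X ≃ₜ X) y ∈ (⇑g) '' U := ⟨y, hy, rfl⟩
      have hgy' : g y ∉ U := fun h => Set.disjoint_left.mp hd h hgy
      simp [hgy, hgy', g.symm_apply_apply, hy]
    · simp [h1, h2]

theorem swapFun_continuous (hU : IsClopen U) : Continuous (swapFun g U) := by
  classical
  have hV : IsClopen ((⇑g) '' U) := ⟨g.isClosedMap U hU.1, g.isOpenMap U hU.2⟩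
  unfold swapFun
  apply Continuous.if
  · intro a ha
    rw [show {x | x ∈ U} = U from rfl, hU.frontier_eq] at ha
    exact absurd ha (Set.notMem_empty a)
  · exact g.continuous
  · apply Continuous.if
    · intro a ha
      rw [show {x | x ∈ (⇑g) '' U} = (⇑g) '' U from rfl, hV.frontier_eq] at ha
      exact absurd ha (Set.notMem_empty a)
    · exact g.symm.continuous
    · exact continuous_id

/-- The homeomorphism swapping a clopen set `U` with its (disjoint) image `g '' U`. -/
noncomputable def swapHomeo (g : X ≃ₜ X) (U : Set X) (hU : IsClopen U)
    (hd : Disjoint U ((⇑g) '' U)) : X ≃ₜ X where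
  toEquiv := (swapFun_involutive hd).toPerm
  continuous_toFun := swapFun_continuous hU
  continuous_invFun := swapFun_continuous hU

@[simp] theorem swapHomeo_apply (hU : IsClopen U) (hd : Disjoint U ((⇑g) '' U)) (x : X) :
    swapHomeo g U hU hd x = swapFun g U x := rfl

theorem swapHomeo_mul_self (hU : IsClopen U) (hd : Disjoint U ((⇑g) '' U)) :
    swapHomeo g U hU hd * swapHomeo g U hU hd = 1 :=
  Homeomorph.ext fun x => swapFun_involutive hd x

theorem swapHomeo_mem_fullGroup (G : Subgroup (X ≃ₜ X)) (hg : g ∈ G)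
    (hU : IsClopen U) (hd : Disjoint U ((⇑g) '' U)) :
    swapHomeo g U hU hd ∈ fullGroup G := by
  classical
  intro x
  show swapFun g U x ∈ orbitOf G x
  unfold swapFun
  by_cases h1 : x ∈ U
  · simpa [h1] using ⟨g, hg, rfl⟩
  · by_cases h2 : x ∈ (⇑g) '' U
    · simp only [h1, h2, if_false, if_true]
      exact ⟨g⁻¹, G.inv_mem hg, rfl⟩
    · simp only [h1, h2, if_false]
      exact ⟨1, G.one_mem, rfl⟩

theorem swapFun_support (hd : Disjoint U ((⇑g) '' U)) :
    {x | swapFun g U x ≠ x} = U ∪ (⇑g) '' U := by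
  classical
  ext x
  simp only [Set.mem_setOf_eq, Set.mem_union]
  unfold swapFun
  by_cases h1 : x ∈ U
  · have hgx : g x ∈ (⇑g) '' U := ⟨x, h1, rfl⟩
    have : g x ≠ x := fun h => Set.disjoint_left.mp hd h1 (h ▸ hgx)
    simp [h1, this]
  · by_cases h2 : x ∈ (⇑g) '' U
    · obtain ⟨y, hy, rfl⟩ := h2
      have hgy : (g : X ≃ₜ X) y ∈ (⇑g) '' U := ⟨y, hy, rfl⟩
      have hne : y ≠ (g : X ≃ₜ X) y := fun h => Set.disjoint_left.mp hd hy (h ▸ hgy)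
      have h1' : (g : X ≃ₜ X) y ∉ U := fun h => Set.disjoint_left.mp hd h hgy
      simp [h1', hgy, g.symm_apply_apply, hne]
    · simp [h1, h2]

theorem spr_swapHomeo (hU : IsClopen U) (hd : Disjoint U ((⇑g) '' U)) :
    spr (swapHomeo g U hU hd) = U ∪ (⇑g) '' U := by
  have hV : IsClopen ((⇑g) '' U) := ⟨g.isClosedMap U hU.1, g.isOpenMap U hU.2⟩
  have hUV : IsClopen (U ∪ (⇑g) '' U) := hU.union hV
  have hsupp : {x | swapHomeo g U hU hd x ≠ x} = U ∪ (⇑g) '' U := swapFun_support hd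
  rw [spr, hsupp, hUV.1.closure_eq, hUV.2.interior_eq]

end SwapAux

section KeyLemma

variable [CompactSpace X] [T2Space X] [TotallyDisconnectedSpace X]

/-- The key step: every point of an open set lies in a generated clopen subset. -/
theorem exists_genBoolAlg_clopen_nhd (G : Subgroup (X ≃ₜ X))
    (h3 : ∀ x : X, ∃ a b c : X, a ∈ orbitOf G x ∧ b ∈ orbitOf G x ∧ c ∈ orbitOf G x ∧
      a ≠ b ∧ a ≠ c ∧ b ≠ c) {A : Set X} (hA : IsOpen A) {x : X} (hx : x ∈ A) :
    ∃ W : Set X,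
      GenBoolAlg {S : Set X | ∃ π ∈ fullGroup G, π * π = 1 ∧ IsClopen (spr π) ∧ S = spr π} W ∧
      IsClopen W ∧ x ∈ W ∧ W ⊆ A := by
  classical
  obtain ⟨a, b, c, ha, hb, hc, hab, hac, hbc⟩ := h3 x
  -- pick two orbit points y z both distinct from x and from each other
  obtain ⟨y, z, hy, hz, hxy, hxz, hyz⟩ :
      ∃ y z : X, y ∈ orbitOf G x ∧ z ∈ orbitOf G x ∧ x ≠ y ∧ x ≠ z ∧ y ≠ z := by
    by_cases h1 : x = a
    · exact ⟨b, c, hb, hc, h1 ▸ hab, h1 ▸ hac, hbc⟩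
    · by_cases h2 : x = b
      · exact ⟨a, c, ha, hc, h1, h2 ▸ hbc, hac⟩
      · exact ⟨a, b, ha, hb, h1, h2, hab⟩
  obtain ⟨g, hgG, hgx⟩ := hy
  obtain ⟨h, hhG, hhx⟩ := hz
  -- separate x, y, z by open sets
  obtain ⟨U1, V1, hU1, hV1, hxU1, hyV1, hd1⟩ := t2_separation hxy
  obtain ⟨U2, V2, hU2, hV2, hxU2, hzV2, hd2⟩ := t2_separation hxz
  obtain ⟨V3, W3, hV3, hW3, hyV3, hzW3, hd3⟩ := t2_separation hyz
  -- small clopen neighborhood of x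
  have hNopen : IsOpen (A ∩ U1 ∩ U2 ∩ (⇑(g : X ≃ₜ X)) ⁻¹' (V1 ∩ V3) ∩
      (⇑(h : X ≃ₜ X)) ⁻¹' (V2 ∩ W3)) := by
    exact ((((hA.inter hU1).inter hU2).inter
      ((hV1.inter hV3).preimage (g : X ≃ₜ X).continuous)).inter
      ((hV2.inter hW3).preimage (h : X ≃ₜ X).continuous))
  have hxN : x ∈ A ∩ U1 ∩ U2 ∩ (⇑(g : X ≃ₜ X)) ⁻¹' (V1 ∩ V3) ∩
      (⇑(h : X ≃ₜ X)) ⁻¹' (V2 ∩ W3) := by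
    refine ⟨⟨⟨⟨hx, hxU1⟩, hxU2⟩, ?_⟩, ?_⟩
    · rw [Set.mem_preimage, hgx]; exact ⟨hyV1, hyV3⟩
    · rw [Set.mem_preimage, hhx]; exact ⟨hzV2, hzW3⟩
  obtain ⟨U, hUclopen, hxU, hUN⟩ := compact_exists_isClopen_in_isOpen hNopen hxN
  have hUA : U ⊆ A := fun t ht => (hUN ht).1.1.1.1
  have hUU1 : U ⊆ U1 := fun t ht => (hUN ht).1.1.1.2
  have hUU2 : U ⊆ U2 := fun t ht => (hUN ht).1.1.2
  have hgUV1 : (⇑(g : X ≃ₜ X)) '' U ⊆ V1 := by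
    rintro _ ⟨t, ht, rfl⟩; exact ((hUN ht).1.2).1
  have hgUV3 : (⇑(g : X ≃ₜ X)) '' U ⊆ V3 := by
    rintro _ ⟨t, ht, rfl⟩; exact ((hUN ht).1.2).2
  have hhUV2 : (⇑(h : X ≃ₜ X)) '' U ⊆ V2 := by
    rintro _ ⟨t, ht, rfl⟩; exact ((hUN ht).2).1
  have hhUW3 : (⇑(h : X ≃ₜ X)) '' U ⊆ W3 := by
    rintro _ ⟨t, ht, rfl⟩; exact ((hUN ht).2).2
  have hdg : Disjoint U ((⇑(g : X ≃ₜ X)) '' U) :=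
    Set.disjoint_of_subset hUU1 hgUV1 hd1
  have hdh : Disjoint U ((⇑(h : X ≃ₜ X)) '' U) :=
    Set.disjoint_of_subset hUU2 hhUV2 hd2
  have hdgh : Disjoint ((⇑(g : X ≃ₜ X)) '' U) ((⇑(h : X ≃ₜ X)) '' U) :=
    Set.disjoint_of_subset hgUV3 hhUW3 hd3
  -- the two involutions
  set π₁ := swapHomeo (g : X ≃ₜ X) U hUclopen hdg with hπ₁
  set π₂ := swapHomeo (h : X ≃ₜ X) U hUclopen hdh with hπ₂
  have hspr₁ : spr π₁ = U ∪ (⇑(g : X ≃ₜ X)) '' U := spr_swapHomeo hUclopen hdg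
  have hspr₂ : spr π₂ = U ∪ (⇑(h : X ≃ₜ X)) '' U := spr_swapHomeo hUclopen hdh
  have hVg : IsClopen ((⇑(g : X ≃ₜ X)) '' U) :=
    ⟨(g : X ≃ₜ X).isClosedMap U hUclopen.1, (g : X ≃ₜ X).isOpenMap U hUclopen.2⟩
  have hVh : IsClopen ((⇑(h : X ≃ₜ X)) '' U) :=
    ⟨(h : X ≃ₜ X).isClosedMap U hUclopen.1, (h : X ≃ₜ X).isOpenMap U hUclopen.2⟩
  have hmem₁ : spr π₁ ∈ {S : Set X | ∃ π ∈ fullGroup G, π * π = 1 ∧ IsClopen (spr π) ∧ S = spr π} :=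
    ⟨π₁, swapHomeo_mem_fullGroup G hgG hUclopen hdg, swapHomeo_mul_self hUclopen hdg,
      by rw [hspr₁]; exact hUclopen.union hVg, rfl⟩
  have hmem₂ : spr π₂ ∈ {S : Set X | ∃ π ∈ fullGroup G, π * π = 1 ∧ IsClopen (spr π) ∧ S = spr π} :=
    ⟨π₂, swapHomeo_mem_fullGroup G hhG hUclopen hdh, swapHomeo_mul_self hUclopen hdh,
      by rw [hspr₂]; exact hUclopen.union hVh, rfl⟩
  refine ⟨spr π₁ ∩ spr π₂, GenBoolAlg.inter (.basic hmem₁) (.basic hmem₂), ?_, ?_, ?_⟩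
  · have : spr π₁ ∩ spr π₂ = U := by
      rw [hspr₁, hspr₂]
      ext t
      simp only [Set.mem_inter_iff, Set.mem_union]
      constructor
      · rintro ⟨h1 | h1, h2 | h2⟩
        · exact h1
        · exact h1
        · exact h2
        · exact (Set.disjoint_left.mp hdgh h1 h2).elim
      · exact fun ht => ⟨Or.inl ht, Or.inl ht⟩
    rw [this]; exact hUclopen
  · rw [hspr₁, hspr₂]; exact ⟨Or.inl hxU, Or.inl hxU⟩
  · rw [hspr₁, hspr₂]
    rintro t ⟨h1 | h1, h2 | h2⟩
    · exact hUA h1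
    · exact hUA h1
    · exact hUA h2
    · exact (Set.disjoint_left.mp hdgh h1 h2).elim

end KeyLemma

/-- If every orbit has at least three points, the clopen supports of involutions in the full
group generate the Boolean algebra of clopen sets. -/
theorem clopen_generated_by_involution_supports {X : Type*} [TopologicalSpace X] [CompactSpace X] [TopologicalSpace.MetrizableSpace X] [TotallyDisconnectedSpace X] [PerfectSpace X] [Nonempty X]
    (G : Subgroup (X ≃ₜ X))
    (h3 : ∀ x : X, ∃ a b c : X, a ∈ orbitOf G x ∧ b ∈ orbitOf G x ∧ c ∈ orbitOf G x ∧
      a ≠ b ∧ a ≠ c ∧ b ≠ c) :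
    ∀ A : Set X, IsClopen A →
      GenBoolAlg {S : Set X | ∃ π ∈ fullGroup G, π * π = 1 ∧ IsClopen (spr π) ∧ S = spr π} A := by
  classical
  intro A hA
  set S : Set (Set X) := {S : Set X | ∃ π ∈ fullGroup G, π * π = 1 ∧ IsClopen (spr π) ∧ S = spr π}
    with hS
  -- the empty set is generated
  have hempty : GenBoolAlg S ∅ := by
    obtain ⟨W, hWgen, _, _, _⟩ :=
      exists_genBoolAlg_clopen_nhd G h3 isOpen_univ (Set.mem_univ (Classical.arbitrary X))
    rw [← Set.inter_compl_self W]
    exact .inter hWgen (.compl hWgen)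
  -- choose a generated clopen neighborhood inside A for each point of A
  choose W hWgen hWclopen hWmem hWsub using
    fun (p : A) => exists_genBoolAlg_clopen_nhd G h3 hA.2 p.2
  have hcover : A ⊆ ⋃ p : A, W p := fun t ht =>
    Set.mem_iUnion.mpr ⟨⟨t, ht⟩, hWmem ⟨t, ht⟩⟩
  have hAcompact : IsCompact A := hA.1.isCompact
  obtain ⟨t, ht⟩ := hAcompact.elim_finite_subcover W (fun p => (hWclopen p).2) hcover
  have hAeq : A = ⋃ p ∈ t, W p := by
    apply Set.Subset.antisymm ht
    intro s hs
    obtain ⟨p, hp, hsp⟩ := Set.mem_iUnion₂.mp hs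
    exact hWsub p hsp
  have hfin : ∀ u : Finset A, GenBoolAlg S (⋃ p ∈ u, W p) := by
    intro u
    induction u using Finset.induction_on with
    | empty => simpa using hempty
    | insert _ _ hni ih =>
        rw [Finset.set_biUnion_insert]
        exact .union (hWgen _) ih
  rw [hAeq]
  exact hfin t
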